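/- Let Ω ⊆ ℝ^m with 0 ∉ Ω, and let h ∈ ℝ^m satisfy h·ω > 0 for every nonzero ω ∈ cl cone(Ω). Define Ω' := {ω/(h·ω) : ω ∈ Ω}. Then every extreme ray r of cl cone(Ω) with h·r = 1 is an extreme point of cl conv(Ω'). -/

import Mathlib

noncomputable section

/-- The conical hull of a set: all finite nonnegative combinations of its elements. -/
def coneHull {E : Type*} [AddCommMonoid E] [Module ℝ E] (Ω : Set E) : Set E :=
  {y | ∃ (k : ℕ) (c : Fin k → ℝ) (v : Fin k → E),
    (∀ i, 0 ≤ c i) ∧ (∀ i, v i ∈ Ω) ∧ y = ∑ i, c i • v i}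

/-- `r` is an extreme ray of the convex cone `K`. -/
def IsExtremeRay {E : Type*} [AddCommMonoid E] [Module ℝ E] (K : Set E) (r : E) : Prop :=
  r ≠ 0 ∧ r ∈ K ∧ ∀ u v : E, u ∈ K → v ∈ K → r = u + v →
    (∃ c : ℝ, 0 ≤ c ∧ u = c • r) ∧ (∃ c : ℝ, 0 ≤ c ∧ v = c • r)

lemma mem_coneHull {E : Type*} [AddCommMonoid E] [Module ℝ E] {Ω : Set E} {ω : E}
    (hω : ω ∈ Ω) : ω ∈ coneHull Ω :=
  ⟨1, fun _ => 1, fun _ => ω, fun _ => zero_le_one, fun _ => hω, by simp⟩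

lemma coneHull_smul {E : Type*} [AddCommMonoid E] [Module ℝ E] {Ω : Set E} {t : ℝ}
    (ht : 0 ≤ t) {x : E} (hx : x ∈ coneHull Ω) : t • x ∈ coneHull Ω := by
  obtain ⟨k, c, v, hc, hv, rfl⟩ := hx
  exact ⟨k, fun i => t * c i, v, fun i => mul_nonneg ht (hc i), hv, by
    simp [Finset.smul_sum, mul_smul]⟩

lemma coneHull_add {E : Type*} [AddCommMonoid E] [Module ℝ E] {Ω : Set E} {x y : E}
    (hx : x ∈ coneHull Ω) (hy : y ∈ coneHull Ω) : x + y ∈ coneHull Ω := by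
  obtain ⟨k, c, v, hc, hv, rfl⟩ := hx
  obtain ⟨l, d, w, hd, hw, rfl⟩ := hy
  refine ⟨k + l, Fin.append c d, Fin.append v w, ?_, ?_, ?_⟩
  · intro i
    refine Fin.addCases (fun j => ?_) (fun j => ?_) i
    · simpa [Fin.append_left] using hc j
    · simpa [Fin.append_right] using hd j
  · intro i
    refine Fin.addCases (fun j => ?_) (fun j => ?_) i
    · simpa [Fin.append_left] using hv j
    · simpa [Fin.append_right] using hw j
  · rw [Fin.sum_univ_add]
    simp [Fin.append_left, Fin.append_right]

lemma convex_coneHull {E : Type*} [AddCommMonoid E] [Module ℝ E] (Ω : Set E) :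
    Convex ℝ (coneHull Ω) := by
  intro x hx y hy a b ha hb _
  exact coneHull_add (coneHull_smul ha hx) (coneHull_smul hb hy)

/-- Claim: every extreme ray r of cl cone(Ω) with h·r = 1 is an extreme point of
cl conv(Ω'), where Ω' normalizes Ω. -/
theorem extremeRay_is_extremePoint_of_slice {m : ℕ} (Ω : Set (Fin m → ℝ))
    (h0 : (0 : Fin m → ℝ) ∉ Ω) (h : Fin m → ℝ)
    (hpos : ∀ ω ∈ closure (coneHull Ω), ω ≠ 0 → 0 < ∑ i, h i * ω i)
    (r : Fin m → ℝ) (hr : IsExtremeRay (closure (coneHull Ω)) r)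
    (hr1 : ∑ i, h i * r i = 1) :
    r ∈ Set.extremePoints ℝ
      (closure (convexHull ℝ ((fun ω => (∑ i, h i * ω i)⁻¹ • ω) '' Ω))) := by
  classical
  set F : (Fin m → ℝ) →ₗ[ℝ] ℝ :=
    { toFun := fun x => ∑ i, h i * x i
      map_add' := by intro x y; simp [mul_add, Finset.sum_add_distrib]
      map_smul' := by
        intro c x
        simp [Finset.mul_sum, mul_left_comm] } with hF
  have hFdef : ∀ x, F x = ∑ i, h i * x i := fun x => rfl
  have hFcont : Continuous F := by
    rw [show (⇑F) = fun x : Fin m → ℝ => ∑ i, h i * x i from funext hFdef]; exact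
      (continuous_finset_sum Finset.univ fun i _ =>
        (continuous_const.mul (continuous_apply i)))
  set Ω' : Set (Fin m → ℝ) := (fun ω => (∑ i, h i * ω i)⁻¹ • ω) '' Ω with hΩ'
  set K := closure (coneHull Ω) with hK
  -- positivity on Ω
  have hposΩ : ∀ ω ∈ Ω, 0 < F ω := by
    intro ω hω
    refine hpos ω (subset_closure (mem_coneHull hω)) ?_
    rintro rfl; exact h0 hω
  -- Ω' ⊆ coneHull Ω
  have hΩ'sub : Ω' ⊆ coneHull Ω := by
    rintro _ ⟨ω, hω, rfl⟩
    exact coneHull_smul (inv_nonneg.2 (hposΩ ω hω).le) (mem_coneHull hω)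
  -- F = 1 on Ω'
  have hF1 : ∀ x ∈ Ω', F x = 1 := by
    rintro _ ⟨ω, hω, rfl⟩
    have hne := (hposΩ ω hω).ne'
    show F ((F ω)⁻¹ • ω) = 1
    rw [map_smul, smul_eq_mul, inv_mul_cancel₀ hne]
  -- F = 1 on closure (convexHull Ω')
  have hclosedF1 : IsClosed {x : Fin m → ℝ | F x = 1} :=
    isClosed_eq hFcont continuous_const
  have hconvF1 : Convex ℝ {x : Fin m → ℝ | F x = 1} := by
    intro x hx y hy a b ha hb hab
    simp only [Set.mem_setOf_eq] at *
    simp [map_add, map_smul, hx, hy, hab, smul_eq_mul]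
  have hF1cl : ∀ x ∈ closure (convexHull ℝ Ω'), F x = 1 := by
    intro x hx
    have : closure (convexHull ℝ Ω') ⊆ {x | F x = 1} :=
      closure_minimal (convexHull_min (fun y hy => hF1 y hy) hconvF1) hclosedF1
    exact this hx
  -- closure (convexHull Ω') ⊆ K
  have hsubK : closure (convexHull ℝ Ω') ⊆ K := by
    refine closure_mono (convexHull_min hΩ'sub (convex_coneHull Ω)) |>.trans ?_
    rw [hK]
  -- K closed under nonneg smul
  have hKsmul : ∀ t : ℝ, 0 ≤ t → ∀ x ∈ K, t • x ∈ K := by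
    intro t ht x hx
    have : Continuous fun y : Fin m → ℝ => t • y := continuous_const_smul t
    have h1 : t • x ∈ closure ((fun y : Fin m → ℝ => t • y) '' coneHull Ω) :=
      (image_closure_subset_closure_image this) ⟨x, hx, rfl⟩
    refine closure_mono ?_ h1
    rintro _ ⟨y, hy, rfl⟩
    exact coneHull_smul ht hy
  -- membership in coneHull gives centerMass representation
  have hnorm : ∀ x ∈ coneHull Ω, 0 < F x → (F x)⁻¹ • x ∈ convexHull ℝ Ω' := by
    rintro x ⟨k, c, v, hc, hv, rfl⟩ hFx
    have hFsum : F (∑ i, c i • v i) = ∑ i, c i * F (v i) := by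
      rw [map_sum]; simp [smul_eq_mul]
    have key : (Finset.univ : Finset (Fin k)).centerMass (fun i => c i * F (v i))
        (fun i => (F (v i))⁻¹ • v i) = (F (∑ i, c i • v i))⁻¹ • ∑ i, c i • v i := by
      rw [Finset.centerMass, hFsum]
      congr 1
      refine Finset.sum_congr rfl fun i _ => ?_
      rw [smul_smul, mul_assoc, mul_inv_cancel₀ (hposΩ (v i) (hv i)).ne', mul_one]
    rw [← key]
    refine Finset.centerMass_mem_convexHull _ (fun i _ => mul_nonneg (hc i) (hposΩ (v i) (hv i)).le)
      ?_ (fun i _ => ⟨v i, hv i, rfl⟩)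
    rw [← hFsum]; exact hFx
  -- r ∈ closure (convexHull Ω')
  have hrK : r ∈ K := hr.2.1
  have hrmem : r ∈ closure (convexHull ℝ Ω') := by
    obtain ⟨x, hxm, hxl⟩ := mem_closure_iff_seq_limit.1 hrK
    have hFlim : Filter.Tendsto (fun n => F (x n)) Filter.atTop (nhds 1) := by
      have := (hFcont.tendsto r).comp hxl
      simpa [Function.comp_def, hFdef, hr1] using this
    have hev : ∀ᶠ n in Filter.atTop, 0 < F (x n) :=
      hFlim.eventually (eventually_gt_nhds one_pos)
    have hmem : ∀ᶠ n in Filter.atTop, (F (x n))⁻¹ • x n ∈ convexHull ℝ Ω' :=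
      hev.mono fun n hn => hnorm _ (hxm n) hn
    have hlim : Filter.Tendsto (fun n => (F (x n))⁻¹ • x n) Filter.atTop (nhds r) := by
      have h1 : Filter.Tendsto (fun n => (F (x n))⁻¹) Filter.atTop (nhds 1) := by
        simpa using hFlim.inv₀ one_ne_zero
      simpa using h1.smul hxl
    exact mem_closure_of_tendsto hlim hmem
  -- extremality
  refine ⟨hrmem, ?_⟩
  intro x hx y hy hseg
  obtain ⟨a, b, ha, hb, hab, habr⟩ := hseg
  have hxK : a • x ∈ K := hKsmul a ha.le x (hsubK hx)
  have hyK : b • y ∈ K := hKsmul b hb.le y (hsubK hy)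
  obtain ⟨⟨c, hc0, hcu⟩, ⟨d, hd0, hdv⟩⟩ := hr.2.2 (a • x) (b • y) hxK hyK habr.symm
  have hFr : F r = 1 := by simpa [hFdef] using hr1
  have hca : c = a := by
    have h1 : F (a • x) = a := by
      rw [map_smul, smul_eq_mul, hF1cl x hx, mul_one]
    have h2 : F (c • r) = c := by rw [map_smul, smul_eq_mul, hFr, mul_one]
    rw [hcu, h2] at h1; exact h1
  have hdb : d = b := by
    have h1 : F (b • y) = b := by
      rw [map_smul, smul_eq_mul, hF1cl y hy, mul_one]
    have h2 : F (d • r) = d := by rw [map_smul, smul_eq_mul, hFr, mul_one]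
    rw [hdv, h2] at h1; exact h1
  · have : a • x = a • r := by rw [hcu, hca]
    exact smul_right_injective _ ha.ne' this
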